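/- Let C be a (k,r,h) data-local maximally recoverable code with exactly two local groups (so k = 2r and n = 2r + 2 + h). Then the generalized Hamming weights of C are d_s = h + 1 + s for 1 ≤ s ≤ r, and d_s = h + 2 + s for r+1 ≤ s ≤ 2r. -/

import Mathlib

open Finset

/-- Coordinate index set of a `(k,r,h)` data-local code with `ℓ` local groups (see stmt 3). -/
abbrev DLIdx (ℓ r h : ℕ) : Type := (Fin ℓ × Fin r) ⊕ (Fin ℓ ⊕ Fin h)

/-- The support `S_i` of the `i`-th local group. -/
def dlGroup (ℓ r h : ℕ) (i : Fin ℓ) : Finset (DLIdx ℓ r h) :=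
  insert (Sum.inr (Sum.inl i))
    ((Finset.univ : Finset (Fin r)).image fun j => Sum.inl (i, j))

section Aux

variable {ℓ : ℕ}

lemma mem_dlGroup_iff {r h : ℕ} {i : Fin ℓ} {x : DLIdx ℓ r h} :
    x ∈ dlGroup ℓ r h i ↔ x = Sum.inr (Sum.inl i) ∨ ∃ j, x = Sum.inl (i, j) := by
  simp [dlGroup, eq_comm]

lemma dlGroup_disjoint {r h : ℕ} {i i' : Fin ℓ} {x : DLIdx ℓ r h}
    (hx : x ∈ dlGroup ℓ r h i) (hx' : x ∈ dlGroup ℓ r h i') : i = i' := by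
  rcases mem_dlGroup_iff.1 hx with rfl | ⟨j, rfl⟩ <;>
    rcases mem_dlGroup_iff.1 hx' with h' | ⟨j', h'⟩ <;> simp_all

lemma card_dlGroup {r h : ℕ} (i : Fin ℓ) : (dlGroup ℓ r h i).card = r + 1 := by
  rw [dlGroup, card_insert_of_notMem (by simp),
    card_image_of_injective _ (fun a b hab => by simpa using hab)]
  simp

lemma fin2 : ∀ i : Fin 2, i = 0 ∨ i = 1 := by decide

end Aux

section Code

variable {r h : ℕ} {F : Type} [Field F] [Fintype F] [DecidableEq F]

lemma zero_of_msg_zero (C : Submodule F (DLIdx 2 r h → F))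
    (hsys : ∀ x : Fin 2 × Fin r → F, ∃! c : DLIdx 2 r h → F,
      c ∈ C ∧ ∀ p, c (Sum.inl p) = x p)
    {c : DLIdx 2 r h → F} (hc : c ∈ C) (hz : ∀ p, c (Sum.inl p) = 0) : c = 0 := by
  obtain ⟨u, -, hu⟩ := hsys 0
  have h1 := hu c ⟨hc, fun p => hz p⟩
  have h2 := hu 0 ⟨C.zero_mem, fun p => rfl⟩
  rw [h1, h2]

lemma zero_of_outside (C : Submodule F (DLIdx 2 r h → F))
    (hsys : ∀ x : Fin 2 × Fin r → F, ∃! c : DLIdx 2 r h → F,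
      c ∈ C ∧ ∀ p, c (Sum.inl p) = x p)
    (a : Fin 2 → Fin r → F) (ha : ∀ i j, a i j ≠ 0)
    (hloc : ∀ c ∈ C, ∀ i : Fin 2,
      c (Sum.inr (Sum.inl i)) = ∑ j : Fin r, a i j * c (Sum.inl (i, j)))
    (e : Fin 2 → DLIdx 2 r h) (he : ∀ i, e i ∈ dlGroup 2 r h i)
    {c : DLIdx 2 r h → F} (hc : c ∈ C)
    (hz : ∀ j : DLIdx 2 r h, j ≠ e 0 → j ≠ e 1 → c j = 0) : c = 0 := by
  have hz' : ∀ j : DLIdx 2 r h, (∀ i, j ≠ e i) → c j = 0 := fun j hj => hz j (hj 0) (hj 1)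
  have hother : ∀ (q : Fin 2 × Fin r) (i : Fin 2), i ≠ q.1 → Sum.inl q ≠ e i := by
    intro q i hi hqe
    have hmem : (Sum.inl q : DLIdx 2 r h) ∈ dlGroup 2 r h i := hqe ▸ he i
    rcases mem_dlGroup_iff.1 hmem with h' | ⟨j, h'⟩
    · exact absurd h' (by simp)
    · apply hi
      have hq : q = (i, j) := by simpa using h'
      rw [hq]
  have hmsg : ∀ p : Fin 2 × Fin r, c (Sum.inl p) = 0 := by
    intro p
    by_cases hpe : (Sum.inl p : DLIdx 2 r h) = e p.1
    · -- parity trick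
      have hq : ∀ i, (Sum.inr (Sum.inl p.1) : DLIdx 2 r h) ≠ e i := by
        intro i hqi
        have : (Sum.inr (Sum.inl p.1) : DLIdx 2 r h) ∈ dlGroup 2 r h i := hqi ▸ he i
        rcases mem_dlGroup_iff.1 this with h' | ⟨j, h'⟩
        · have : p.1 = i := by simpa using h'
          subst this
          rw [← hpe] at hqi
          simp at hqi
        · simp at h'
      have hqz : c (Sum.inr (Sum.inl p.1)) = 0 := hz' _ hq
      have hsum := hloc c hc p.1
      rw [hqz] at hsum
      have hterm : ∀ j ∈ (univ : Finset (Fin r)), j ≠ p.2 →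
          a p.1 j * c (Sum.inl (p.1, j)) = 0 := by
        intro j _ hj
        have : c (Sum.inl (p.1, j)) = 0 := by
          apply hz'
          intro i hij
          by_cases hi : i = p.1
          · subst hi
            rw [← hpe] at hij
            apply hj
            have : ((p.1, j) : Fin 2 × Fin r) = p := by simpa using hij
            exact congrArg Prod.snd this
          · exact hother (p.1, j) i hi hij
        rw [this, mul_zero]
      rw [Finset.sum_eq_single p.2 hterm (by simp)] at hsum
      have := (mul_eq_zero.1 hsum.symm).resolve_left (ha p.1 p.2)
      simpa using this
    · apply hz'
      intro i
      by_cases hi : i = p.1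
      · subst hi; exact hpe
      · exact hother p i hi
  exact zero_of_msg_zero C hsys hc hmsg

end Code

section Lower

variable {r h : ℕ} {F : Type} [Field F] [Fintype F] [DecidableEq F]

lemma core_lower (hr : 0 < r) (C : Submodule F (DLIdx 2 r h → F))
    (hsys : ∀ x : Fin 2 × Fin r → F, ∃! c : DLIdx 2 r h → F,
      c ∈ C ∧ ∀ p, c (Sum.inl p) = x p)
    (a : Fin 2 → Fin r → F) (ha : ∀ i j, a i j ≠ 0)
    (hloc : ∀ c ∈ C, ∀ i : Fin 2,
      c (Sum.inr (Sum.inl i)) = ∑ j : Fin r, a i j * c (Sum.inl (i, j)))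
    (hmrc : ∀ E : Finset (DLIdx 2 r h), E.card = 2 * r + h →
      (∀ i : Fin 2, (E ∩ dlGroup 2 r h i).card = r) →
      Module.finrank F
          (C.map (LinearMap.funLeft F F (Subtype.val : ↥E → DLIdx 2 r h))) = 2 * r ∧
      ∀ y ∈ C.map (LinearMap.funLeft F F (Subtype.val : ↥E → DLIdx 2 r h)),
        y ≠ 0 → h + 1 ≤ hammingNorm y)
    (D : Submodule F (DLIdx 2 r h → F)) (hDC : D ≤ C)
    {s : ℕ} (hs1 : 1 ≤ s) (hrank : Module.finrank F D = s)
    (e : Fin 2 → DLIdx 2 r h) (he : ∀ i, e i ∈ dlGroup 2 r h i)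
    (T : Finset (DLIdx 2 r h)) (hT : ∀ j, j ∈ T ↔ ∃ c ∈ D, c j ≠ 0) :
    h + s + (T ∩ {e 0, e 1}).card ≤ T.card := by
  classical
  have hTz : ∀ c ∈ D, ∀ j, j ∉ T → c j = 0 := by
    intro c hc j hj
    by_contra hne
    exact hj ((hT j).2 ⟨c, hc, hne⟩)
  have hne01 : e 0 ≠ e 1 := by
    intro heq
    have h01 : (0 : Fin 2) = 1 := dlGroup_disjoint (he 0) (heq ▸ he 1)
    simp at h01
  set E : Finset (DLIdx 2 r h) := univ \ {e 0, e 1} with hE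
  have hEcard : E.card = 2 * r + h := by
    have h2 : ({e 0, e 1} : Finset (DLIdx 2 r h)).card = 2 := card_pair hne01
    have htot : (univ : Finset (DLIdx 2 r h)).card = 2 * r + 2 + h := by
      simp [card_univ]
      ring
    rw [hE, card_sdiff_of_subset (subset_univ _), h2, htot]
    omega
  have hclaim : ∀ x ∈ dlGroup 2 r h 0 ∪ dlGroup 2 r h 1, ∀ i' : Fin 2, x = e i' →
      ∀ i : Fin 2, x ∈ dlGroup 2 r h i → i' = i := by
    intro x _ i' hxe i hxi
    exact (dlGroup_disjoint (hxe ▸ hxi : e i' ∈ dlGroup 2 r h i) (he i')).symm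
  have hEint : ∀ i : Fin 2, (E ∩ dlGroup 2 r h i).card = r := by
    intro i
    have hEq : E ∩ dlGroup 2 r h i = (dlGroup 2 r h i).erase (e i) := by
      ext x
      simp only [hE, mem_inter, mem_sdiff, mem_univ, true_and, mem_insert, mem_singleton,
        mem_erase]
      constructor
      · rintro ⟨hne, hx⟩
        push_neg at hne
        refine ⟨?_, hx⟩
        rcases fin2 i with rfl | rfl
        · exact hne.1
        · exact hne.2
      · rintro ⟨hxe, hx⟩
        refine ⟨?_, hx⟩
        rintro (rfl | rfl)
        · have : (0 : Fin 2) = i :=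
            (dlGroup_disjoint (he 0) hx)
          exact hxe (by rw [← this])
        · have : (1 : Fin 2) = i :=
            (dlGroup_disjoint (he 1) hx)
          exact hxe (by rw [← this])
    rw [hEq, card_erase_of_mem (he i), card_dlGroup]
    simp
  obtain ⟨-, hwt⟩ := hmrc E hEcard hEint
  set φ := LinearMap.funLeft F F (Subtype.val : ↥E → DLIdx 2 r h) with hφ
  have hker : ∀ c ∈ D, φ c = 0 → c = 0 := by
    intro c hc hφc
    apply zero_of_outside C hsys a ha hloc e he (hDC hc)
    intro j hj0 hj1
    have hjE : j ∈ E := by simp [hE, hj0, hj1]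
    have := congrFun hφc (⟨j, hjE⟩ : ↥E)
    simpa [hφ] using this
  set D' := D.map φ with hD'
  have hrank' : Module.finrank F D' = s := by
    have hinj : Function.Injective (φ.comp D.subtype) := by
      rw [← LinearMap.ker_eq_bot]
      rw [Submodule.eq_bot_iff]
      intro z hz
      have : (z : DLIdx 2 r h → F) = 0 := hker z z.2 hz
      exact Subtype.ext this
    have h1 := LinearMap.finrank_range_of_inj hinj
    rw [LinearMap.range_comp, Submodule.range_subtype] at h1
    rw [hD', h1, hrank]
  set U : Finset ↥E := univ.filter (fun i => (i : DLIdx 2 r h) ∈ T) with hU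
  have hUim : U.image Subtype.val = T ∩ E := by
    ext x
    simp only [mem_image, hU, mem_filter, mem_univ, true_and, mem_inter]
    constructor
    · rintro ⟨a, ha', rfl⟩
      exact ⟨ha', a.2⟩
    · rintro ⟨hxT, hxE⟩
      exact ⟨⟨x, hxE⟩, hxT, rfl⟩
  have hUcard : U.card = (T ∩ E).card := by
    rw [← hUim, card_image_of_injective _ Subtype.val_injective]
  have hD'z : ∀ y ∈ D', ∀ i : ↥E, i ∉ U → y i = 0 := by
    rintro y ⟨c, hc, rfl⟩ i hi
    have hiT : (i : DLIdx 2 r h) ∉ T := by simpa [hU] using hi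
    simpa [hφ] using hTz c hc _ hiT
  have hsU : s ≤ U.card := by
    have hinj2 : Function.Injective
        ((LinearMap.funLeft F F (fun u : ↥U => (u : ↥E))).comp D'.subtype) := by
      rw [← LinearMap.ker_eq_bot, Submodule.eq_bot_iff]
      intro z hz
      apply Subtype.ext
      funext i
      by_cases hiU : i ∈ U
      · have := congrFun hz (⟨i, hiU⟩ : ↥U)
        simpa using this
      · exact hD'z _ z.2 i hiU
    have h1 := LinearMap.finrank_le_finrank_of_injective hinj2
    rw [hrank', Module.finrank_pi, Fintype.card_coe] at h1
    exact h1
  obtain ⟨Z, hZU, hZcard⟩ := Finset.exists_subset_card_eq (show s - 1 ≤ U.card by omega)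
  have hnotinj : ¬ Function.Injective
      ((LinearMap.funLeft F F (fun z : ↥Z => (z : ↥E))).comp D'.subtype) := by
    intro hinj
    have h1 := LinearMap.finrank_le_finrank_of_injective hinj
    rw [hrank', Module.finrank_pi, Fintype.card_coe, hZcard] at h1
    omega
  have hkerne : (LinearMap.ker
      ((LinearMap.funLeft F F (fun z : ↥Z => (z : ↥E))).comp D'.subtype)) ≠ ⊥ := by
    intro hbot
    exact hnotinj (LinearMap.ker_eq_bot.1 hbot)
  obtain ⟨z, hzker, hz0⟩ := Submodule.exists_mem_ne_zero_of_ne_bot hkerne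
  set y := (z : ↥E → F) with hy
  have hyD' : y ∈ D' := z.2
  have hy0 : y ≠ 0 := by
    intro hy'
    exact hz0 (Subtype.ext hy')
  have hZzero : ∀ i : ↥E, i ∈ Z → y i = 0 := by
    intro i hi
    have := congrFun (LinearMap.mem_ker.1 hzker) (⟨i, hi⟩ : ↥Z)
    simpa using this
  have hwty : h + 1 ≤ hammingNorm y :=
    hwt y (Submodule.map_mono hDC hyD') hy0
  have hnorm : hammingNorm y ≤ (U \ Z).card := by
    have hsub : (univ.filter fun i => y i ≠ 0) ⊆ U \ Z := by
      intro i hi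
      simp only [mem_filter, mem_univ, true_and] at hi
      rw [mem_sdiff]
      constructor
      · by_contra hiU
        exact hi (hD'z y hyD' i hiU)
      · intro hiZ
        exact hi (hZzero i hiZ)
    calc hammingNorm y = (univ.filter fun i => y i ≠ 0).card := rfl
      _ ≤ (U \ Z).card := card_le_card hsub
  have hUZ : (U \ Z).card = U.card - (s - 1) := by
    rw [card_sdiff_of_subset hZU, hZcard]
  have hZleU : Z.card ≤ U.card := card_le_card hZU
  have hhsU : h + s ≤ U.card := by
    rw [hUZ] at hnorm
    omega
  have hTE : T ∩ E = T \ {e 0, e 1} := by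
    ext x
    simp [hE, and_comm]
  have hsplit : (T \ {e 0, e 1}).card + (T ∩ {e 0, e 1}).card = T.card :=
    card_sdiff_add_card_inter T {e 0, e 1}
  rw [hUcard, hTE] at hhsU
  omega

end Lower

section LowerAB

variable {r h : ℕ} {F : Type} [Field F] [Fintype F] [DecidableEq F]

lemma lowerA (hr : 0 < r) (C : Submodule F (DLIdx 2 r h → F))
    (hsys : ∀ x : Fin 2 × Fin r → F, ∃! c : DLIdx 2 r h → F,
      c ∈ C ∧ ∀ p, c (Sum.inl p) = x p)
    (a : Fin 2 → Fin r → F) (ha : ∀ i j, a i j ≠ 0)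
    (hloc : ∀ c ∈ C, ∀ i : Fin 2,
      c (Sum.inr (Sum.inl i)) = ∑ j : Fin r, a i j * c (Sum.inl (i, j)))
    (hmrc : ∀ E : Finset (DLIdx 2 r h), E.card = 2 * r + h →
      (∀ i : Fin 2, (E ∩ dlGroup 2 r h i).card = r) →
      Module.finrank F
          (C.map (LinearMap.funLeft F F (Subtype.val : ↥E → DLIdx 2 r h))) = 2 * r ∧
      ∀ y ∈ C.map (LinearMap.funLeft F F (Subtype.val : ↥E → DLIdx 2 r h)),
        y ≠ 0 → h + 1 ≤ hammingNorm y)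
    (D : Submodule F (DLIdx 2 r h → F)) (hDC : D ≤ C)
    {s : ℕ} (hs1 : 1 ≤ s) (hrank : Module.finrank F D = s) :
    h + s + 1 ≤ Set.ncard {j : DLIdx 2 r h | ∃ c ∈ D, c j ≠ 0} := by
  classical
  set T : Finset (DLIdx 2 r h) := univ.filter (fun j => ∃ c ∈ D, c j ≠ 0) with hTdef
  have hT : ∀ j, j ∈ T ↔ ∃ c ∈ D, c j ≠ 0 := by intro j; simp [hTdef]
  have hset : {j : DLIdx 2 r h | ∃ c ∈ D, c j ≠ 0} = ↑T := by
    ext j; simp [hTdef]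
  rw [hset, Set.ncard_coe_finset]
  -- find a nonzero codeword and a nonzero message coordinate
  have hDne : D ≠ ⊥ := by
    intro hbot
    rw [hbot, finrank_bot] at hrank
    omega
  obtain ⟨c, hcD, hc0⟩ := Submodule.exists_mem_ne_zero_of_ne_bot hDne
  have hmsg : ¬ ∀ p : Fin 2 × Fin r, c (Sum.inl p) = 0 := by
    intro hz
    exact hc0 (zero_of_msg_zero C hsys (hDC hcD) hz)
  push_neg at hmsg
  obtain ⟨p, hp⟩ := hmsg
  set e : Fin 2 → DLIdx 2 r h :=
    fun i => if i = p.1 then Sum.inl p else Sum.inr (Sum.inl i) with he_def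
  have he : ∀ i, e i ∈ dlGroup 2 r h i := by
    intro i
    rw [he_def]
    by_cases hi : i = p.1
    · subst hi
      simp only [if_pos rfl]
      exact mem_dlGroup_iff.2 (Or.inr ⟨p.2, rfl⟩)
    · simp only [if_neg hi]
      exact mem_dlGroup_iff.2 (Or.inl rfl)
  have hcore := core_lower hr C hsys a ha hloc hmrc D hDC hs1 hrank e he T hT
  have hmem : e p.1 ∈ T ∩ {e 0, e 1} := by
    rw [mem_inter]
    constructor
    · rw [hT]
      refine ⟨c, hcD, ?_⟩
      rw [he_def]
      simpa using hp
    · rcases fin2 p.1 with hp1 | hp1 <;> rw [hp1] <;> simp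
  have hpos : 1 ≤ (T ∩ {e 0, e 1}).card := card_pos.2 ⟨e p.1, hmem⟩
  omega

lemma lowerB (hr : 0 < r) (C : Submodule F (DLIdx 2 r h → F))
    (hsys : ∀ x : Fin 2 × Fin r → F, ∃! c : DLIdx 2 r h → F,
      c ∈ C ∧ ∀ p, c (Sum.inl p) = x p)
    (a : Fin 2 → Fin r → F) (ha : ∀ i j, a i j ≠ 0)
    (hloc : ∀ c ∈ C, ∀ i : Fin 2,
      c (Sum.inr (Sum.inl i)) = ∑ j : Fin r, a i j * c (Sum.inl (i, j)))
    (hmrc : ∀ E : Finset (DLIdx 2 r h), E.card = 2 * r + h →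
      (∀ i : Fin 2, (E ∩ dlGroup 2 r h i).card = r) →
      Module.finrank F
          (C.map (LinearMap.funLeft F F (Subtype.val : ↥E → DLIdx 2 r h))) = 2 * r ∧
      ∀ y ∈ C.map (LinearMap.funLeft F F (Subtype.val : ↥E → DLIdx 2 r h)),
        y ≠ 0 → h + 1 ≤ hammingNorm y)
    (D : Submodule F (DLIdx 2 r h → F)) (hDC : D ≤ C)
    {s : ℕ} (hs1 : r + 1 ≤ s) (hrank : Module.finrank F D = s) :
    h + s + 2 ≤ Set.ncard {j : DLIdx 2 r h | ∃ c ∈ D, c j ≠ 0} := by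
  classical
  set T : Finset (DLIdx 2 r h) := univ.filter (fun j => ∃ c ∈ D, c j ≠ 0) with hTdef
  have hT : ∀ j, j ∈ T ↔ ∃ c ∈ D, c j ≠ 0 := by intro j; simp [hTdef]
  have hTz : ∀ c ∈ D, ∀ j, j ∉ T → c j = 0 := by
    intro c hc j hj
    by_contra hne
    exact hj ((hT j).2 ⟨c, hc, hne⟩)
  have hset : {j : DLIdx 2 r h | ∃ c ∈ D, c j ≠ 0} = ↑T := by
    ext j; simp [hTdef]
  rw [hset, Set.ncard_coe_finset]
  -- each group meets T
  have hgrp : ∀ i : Fin 2, ∃ x ∈ T, x ∈ dlGroup 2 r h i := by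
    intro i
    by_contra hcon
    push_neg at hcon
    -- all message coords of group i vanish on D
    have hgz : ∀ c ∈ D, ∀ j : Fin r, c (Sum.inl (i, j)) = 0 := by
      intro c hc j
      apply hTz c hc
      intro hmemT
      exact absurd (mem_dlGroup_iff.2 (Or.inr ⟨j, rfl⟩)) (hcon _ hmemT)
    -- D embeds into group-(other i) message coordinates
    set i' : Fin 2 := if i = 0 then 1 else 0 with hi'
    have hinj : Function.Injective
        ((LinearMap.funLeft F F (fun j : Fin r => (Sum.inl (i', j) : DLIdx 2 r h))).comp
          D.subtype) := by
      rw [← LinearMap.ker_eq_bot, Submodule.eq_bot_iff]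
      intro z hz
      apply Subtype.ext
      apply zero_of_msg_zero C hsys (hDC z.2)
      intro p
      have hcases : p.1 = i ∨ p.1 = i' := by
        rcases fin2 i with rfl | rfl <;> rcases fin2 p.1 with hp1 | hp1 <;> simp [hi', hp1]
      rcases hcases with hp1 | hp1
      · have := hgz z z.2 p.2
        rw [← hp1] at this
        simpa using this
      · have := congrFun hz p.2
        simp only [LinearMap.comp_apply, LinearMap.funLeft_apply] at this
        rw [← hp1] at this
        simpa using this
    have hle := LinearMap.finrank_le_finrank_of_injective hinj
    rw [hrank, Module.finrank_pi, Fintype.card_fin] at hle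
    omega
  obtain ⟨x0, hx0T, hx0g⟩ := hgrp 0
  obtain ⟨x1, hx1T, hx1g⟩ := hgrp 1
  set e : Fin 2 → DLIdx 2 r h := fun i => if i = 0 then x0 else x1 with he_def
  have he : ∀ i, e i ∈ dlGroup 2 r h i := by
    intro i
    rcases fin2 i with rfl | rfl
    · simpa [he_def] using hx0g
    · simpa [he_def] using hx1g
  have hcore := core_lower hr C hsys a ha hloc hmrc D hDC (by omega) hrank e he T hT
  have hne01 : e 0 ≠ e 1 := by
    intro heq
    have h01 : (0 : Fin 2) = 1 := dlGroup_disjoint (he 0) (heq ▸ he 1)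
    simp at h01
  have hsubT : ({e 0, e 1} : Finset (DLIdx 2 r h)) ⊆ T := by
    intro x hx
    rw [mem_insert, mem_singleton] at hx
    rcases hx with rfl | rfl
    · simpa [he_def] using hx0T
    · simpa [he_def] using hx1T
  have h2 : (T ∩ {e 0, e 1}).card = 2 := by
    rw [inter_eq_right.2 hsubT, card_pair hne01]
  omega

end LowerAB

section Upper

variable {r h : ℕ} {F : Type} [Field F] [Fintype F] [DecidableEq F]

lemma upper (hr : 0 < r) {s : ℕ} (hs2r : s ≤ 2 * r)
    (C : Submodule F (DLIdx 2 r h → F))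
    (hsys : ∀ x : Fin 2 × Fin r → F, ∃! c : DLIdx 2 r h → F,
      c ∈ C ∧ ∀ p, c (Sum.inl p) = x p)
    (a : Fin 2 → Fin r → F)
    (hloc : ∀ c ∈ C, ∀ i : Fin 2,
      c (Sum.inr (Sum.inl i)) = ∑ j : Fin r, a i j * c (Sum.inl (i, j))) :
    ∃ D : Submodule F (DLIdx 2 r h → F), D ≤ C ∧ Module.finrank F D = s ∧
      Set.ncard {j : DLIdx 2 r h | ∃ c ∈ D, c j ≠ 0} ≤
        h + s + (if s ≤ r then 1 else 2) := by
  classical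
  set π : (DLIdx 2 r h → F) →ₗ[F] (Fin 2 × Fin r → F) :=
    LinearMap.funLeft F F Sum.inl with hπ
  set πC : ↥C →ₗ[F] (Fin 2 × Fin r → F) := π.comp C.subtype with hπC
  have hbij : Function.Bijective πC := by
    constructor
    · intro c c' hcc
      obtain ⟨u, -, hu⟩ := hsys (πC c)
      have h1 := hu c ⟨c.2, fun p => rfl⟩
      have h2 := hu c' ⟨c'.2, fun p => (congrFun hcc p).symm⟩
      exact Subtype.ext (by rw [h1, h2])
    · intro x
      obtain ⟨u, ⟨huC, hux⟩, -⟩ := hsys x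
      exact ⟨⟨u, huC⟩, funext fun p => hux p⟩
  set eC : ↥C ≃ₗ[F] (Fin 2 × Fin r → F) := LinearEquiv.ofBijective πC hbij with heC
  set g : (Fin s → F) →ₗ[F] (Fin 2 × Fin r → F) :=
    { toFun := fun x p =>
        if hp : p.1.val * r + p.2.val < s then x ⟨p.1.val * r + p.2.val, hp⟩ else 0
      map_add' := by
        intro x y; funext p
        by_cases hp : p.1.val * r + p.2.val < s <;> simp [hp]
      map_smul' := by
        intro m x; funext p
        by_cases hp : p.1.val * r + p.2.val < s <;> simp [hp] } with hg_def
  have hg : ∀ (x : Fin s → F) (t : Fin s) (p : Fin 2 × Fin r),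
      p.1.val * r + p.2.val = t.val → g x p = x t := by
    intro x t p hp
    have h1 : p.1.val * r + p.2.val < s := by
      rw [hp]; exact t.isLt
    show dite _ _ _ = _
    rw [dif_pos h1]
    exact congrArg x (Fin.ext hp)
  have hgnz : ∀ (x : Fin s → F) (p : Fin 2 × Fin r),
      ¬ (p.1.val * r + p.2.val < s) → g x p = 0 := by
    intro x p hp
    show dite _ _ _ = _
    rw [dif_neg hp]
  have hginj : Function.Injective g := by
    intro x y hxy
    funext t
    have hlt2 : (t : ℕ) / r < 2 := by
      rw [Nat.div_lt_iff_lt_mul hr]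
      have := t.isLt
      omega
    set p : Fin 2 × Fin r := (⟨(t : ℕ) / r, hlt2⟩, ⟨(t : ℕ) % r, Nat.mod_lt _ hr⟩) with hp_def
    have hpt : p.1.val * r + p.2.val = (t : ℕ) := Nat.div_add_mod' t r
    have hcf := congrFun hxy p
    rw [hg x t p hpt, hg y t p hpt] at hcf
    exact hcf
  set f : (Fin s → F) →ₗ[F] (DLIdx 2 r h → F) :=
    C.subtype.comp ((eC.symm : (Fin 2 × Fin r → F) →ₗ[F] ↥C).comp g) with hf
  have hfC : ∀ x, f x ∈ C := fun x => (eC.symm (g x)).2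
  have hmsgf : ∀ x p, f x (Sum.inl p) = g x p := by
    intro x p
    have h2 : πC (eC.symm (g x)) = g x := eC.apply_symm_apply (g x)
    have := congrFun h2 p
    simpa [hπC, hπ, hf] using this
  refine ⟨LinearMap.range f, ?_, ?_, ?_⟩
  · rintro y ⟨x, rfl⟩
    exact hfC x
  · have hfinj : Function.Injective f :=
      C.injective_subtype.comp (eC.symm.injective.comp hginj)
    rw [LinearMap.finrank_range_of_inj hfinj, Module.finrank_pi, Fintype.card_fin]
  · set A : Finset (DLIdx 2 r h) :=
      (((univ : Finset (Fin 2 × Fin r)).filter fun p => p.1.val * r + p.2.val < s).image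
          Sum.inl
        ∪ ((univ : Finset (Fin 2)).filter fun i => s ≤ r → i = 0).image
            (fun i => Sum.inr (Sum.inl i)))
        ∪ (univ : Finset (Fin h)).image (fun t => Sum.inr (Sum.inr t)) with hA
    have hsub : {j : DLIdx 2 r h | ∃ c ∈ LinearMap.range f, c j ≠ 0} ⊆ ↑A := by
      rintro j ⟨c, ⟨x, rfl⟩, hcj⟩
      rw [mem_coe, hA]
      match j with
      | Sum.inl p =>
        have hgx : g x p ≠ 0 := by rwa [hmsgf] at hcj
        have hp : p.1.val * r + p.2.val < s := by
          by_contra hp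
          exact hgx (hgnz x p hp)
        rw [mem_union, mem_union]
        exact Or.inl (Or.inl (mem_image.2 ⟨p, mem_filter.2 ⟨mem_univ _, hp⟩, rfl⟩))
      | Sum.inr (Sum.inl i) =>
        have hi : s ≤ r → i = 0 := by
          intro hsr
          by_contra hi0
          have hi1 : i = 1 := (fin2 i).resolve_left hi0
          apply hcj
          rw [hloc (f x) (hfC x) i]
          apply Finset.sum_eq_zero
          intro j _
          have hz : g x (i, j) = 0 := by
            apply hgnz
            subst hi1
            simp only [Fin.val_one]
            omega
          rw [hmsgf, hz, mul_zero]
        rw [mem_union, mem_union]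
        exact Or.inl (Or.inr (mem_image.2 ⟨i, mem_filter.2 ⟨mem_univ _, hi⟩, rfl⟩))
      | Sum.inr (Sum.inr t) =>
        rw [mem_union]
        exact Or.inr (mem_image.2 ⟨t, mem_univ _, rfl⟩)
    have hcardA : A.card ≤ h + s + (if s ≤ r then 1 else 2) := by
      have c1 : (((univ : Finset (Fin 2 × Fin r)).filter
          fun p => p.1.val * r + p.2.val < s).image
            (Sum.inl : Fin 2 × Fin r → DLIdx 2 r h)).card ≤ s := by
        rw [card_image_of_injective _ Sum.inl_injective]
        have : ((univ : Finset (Fin 2 × Fin r)).filter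
            fun p => p.1.val * r + p.2.val < s).card ≤ (Finset.range s).card := by
          apply Finset.card_le_card_of_injOn (fun p => p.1.val * r + p.2.val)
          · intro p hp
            rw [mem_coe, mem_filter] at hp
            rw [mem_coe, Finset.mem_range]
            exact hp.2
          · intro p hp q hq hpq
            have hpq' : p.1.val * r + p.2.val = q.1.val * r + q.2.val := hpq
            have hp2 := p.2.isLt
            have hq2 := q.2.isLt
            have hp1 := p.1.isLt
            have hq1 := q.1.isLt
            have hc : p.1.val = 0 ∨ p.1.val = 1 := by omega
            have hcq : q.1.val = 0 ∨ q.1.val = 1 := by omega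
            have h1 : p.1.val = q.1.val ∧ p.2.val = q.2.val := by
              rcases hc with hc | hc <;> rcases hcq with hcq | hcq <;>
                rw [hc, hcq] at hpq' <;>
                simp only [zero_mul, one_mul, zero_add] at hpq' <;> omega
            have : p.1 = q.1 := Fin.ext h1.1
            have : p.2 = q.2 := Fin.ext h1.2
            exact Prod.ext (Fin.ext h1.1) (Fin.ext h1.2)
        simpa using this
      have c2 : (((univ : Finset (Fin 2)).filter fun i => s ≤ r → i = 0).image
          (fun i => Sum.inr (Sum.inl i) : Fin 2 → DLIdx 2 r h)).card ≤
          (if s ≤ r then 1 else 2) := by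
        split
        · next hsr =>
          apply le_trans (card_image_le)
          have : ((univ : Finset (Fin 2)).filter fun i => s ≤ r → i = 0) ⊆ {0} := by
            intro i hi
            rw [mem_filter] at hi
            rw [mem_singleton]
            exact hi.2 hsr
          simpa using card_le_card this
        · next hsr =>
          apply le_trans (card_image_le)
          have := card_filter_le (univ : Finset (Fin 2)) (fun i => s ≤ r → i = 0)
          simpa using this
      have c3 : ((univ : Finset (Fin h)).image
          (fun t => Sum.inr (Sum.inr t) : Fin h → DLIdx 2 r h)).card ≤ h := by
        apply le_trans (card_image_le)
        simp
      calc A.card ≤ _ := card_union_le _ _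
        _ ≤ _ := Nat.add_le_add (card_union_le _ _) le_rfl
        _ ≤ s + (if s ≤ r then 1 else 2) + h :=
          Nat.add_le_add (Nat.add_le_add c1 c2) c3
        _ = h + s + (if s ≤ r then 1 else 2) := by omega
    calc Set.ncard {j : DLIdx 2 r h | ∃ c ∈ LinearMap.range f, c j ≠ 0}
        ≤ Set.ncard (↑A : Set (DLIdx 2 r h)) := Set.ncard_le_ncard hsub A.finite_toSet
      _ = A.card := Set.ncard_coe_finset A
      _ ≤ _ := hcardA

end Upper


/-- the generalized Hamming weights of a `(k,r,h)` data-local MRC with two local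
groups (`k = 2r`, `n = 2r + 2 + h`) are `d_s = h + 1 + s` for `1 ≤ s ≤ r` and
`d_s = h + 2 + s` for `r + 1 ≤ s ≤ 2r`. -/
theorem stmt_12 (r h : ℕ) (hr : 0 < r)
    (F : Type) [Field F] [Fintype F] [DecidableEq F]
    (C : Submodule F (DLIdx 2 r h → F))
    (hsys : ∀ x : Fin 2 × Fin r → F, ∃! c : DLIdx 2 r h → F,
      c ∈ C ∧ ∀ p, c (Sum.inl p) = x p)
    (a : Fin 2 → Fin r → F) (ha : ∀ i j, a i j ≠ 0)
    (hloc : ∀ c ∈ C, ∀ i : Fin 2,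
      c (Sum.inr (Sum.inl i)) = ∑ j : Fin r, a i j * c (Sum.inl (i, j)))
    (hmrc : ∀ E : Finset (DLIdx 2 r h), E.card = 2 * r + h →
      (∀ i : Fin 2, (E ∩ dlGroup 2 r h i).card = r) →
      Module.finrank F
          (C.map (LinearMap.funLeft F F (Subtype.val : ↥E → DLIdx 2 r h))) = 2 * r ∧
      ∀ y ∈ C.map (LinearMap.funLeft F F (Subtype.val : ↥E → DLIdx 2 r h)),
        y ≠ 0 → h + 1 ≤ hammingNorm y)
    (d : ℕ → ℕ)
    (hd : ∀ s, 1 ≤ s → s ≤ 2 * r →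
      IsLeast {w | ∃ D : Submodule F (DLIdx 2 r h → F), D ≤ C ∧ Module.finrank F D = s ∧
        Set.ncard {j : DLIdx 2 r h | ∃ c ∈ D, c j ≠ 0} = w} (d s)) :
    (∀ s, 1 ≤ s → s ≤ r → d s = h + 1 + s) ∧
    (∀ s, r + 1 ≤ s → s ≤ 2 * r → d s = h + 2 + s) := by
  constructor
  · intro s hs1 hsr
    have hs2r : s ≤ 2 * r := by omega
    have hL := hd s hs1 hs2r
    obtain ⟨D, hDC, hrank, hnc⟩ := upper hr hs2r C hsys a hloc
    rw [if_pos hsr] at hnc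
    have hmem : Set.ncard {j : DLIdx 2 r h | ∃ c ∈ D, c j ≠ 0} ∈
        {w | ∃ D : Submodule F (DLIdx 2 r h → F), D ≤ C ∧ Module.finrank F D = s ∧
          Set.ncard {j : DLIdx 2 r h | ∃ c ∈ D, c j ≠ 0} = w} := ⟨D, hDC, hrank, rfl⟩
    have hle := le_trans (hL.2 hmem) hnc
    obtain ⟨D', hDC', hrank', hw⟩ := hL.1
    have hlb := lowerA hr C hsys a ha hloc hmrc D' hDC' hs1 hrank'
    rw [hw] at hlb
    clear hmem hnc hw hL
    omega
  · intro s hs1 hs2r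
    have h1s : 1 ≤ s := by omega
    have hsnr : ¬ s ≤ r := by omega
    have hL := hd s h1s hs2r
    obtain ⟨D, hDC, hrank, hnc⟩ := upper hr hs2r C hsys a hloc
    rw [if_neg hsnr] at hnc
    have hmem : Set.ncard {j : DLIdx 2 r h | ∃ c ∈ D, c j ≠ 0} ∈
        {w | ∃ D : Submodule F (DLIdx 2 r h → F), D ≤ C ∧ Module.finrank F D = s ∧
          Set.ncard {j : DLIdx 2 r h | ∃ c ∈ D, c j ≠ 0} = w} := ⟨D, hDC, hrank, rfl⟩
    have hle := le_trans (hL.2 hmem) hnc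
    obtain ⟨D', hDC', hrank', hw⟩ := hL.1
    have hlb := lowerB hr C hsys a ha hloc hmrc D' hDC' hs1 hrank'
    rw [hw] at hlb
    clear hmem hnc hw hL
    omega
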